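/- Let F and φ be holomorphic on the disc {|z| < r₀} and suppose there exists r < r₀ with |φ(z)| < r whenever |z| = r. Then the Lagrange series G₀ = Σ_{n≥0} (1/n!) · (d/dε)^n (φ(ε)^n F(ε)) |_{ε=0} converges absolutely, the equation z = φ(z) has a unique solution z* in {|z| < r}, φ'(z*) ≠ 1, and G₀ = F(z*)/(1 − φ'(z*)). -/

import Mathlib

open Metric

open Complex Filter Topology


/-- Circle integral of a derivative of a holomorphic function vanishes. -/
lemma circleIntegral_deriv_eq_zero {U : Set ℂ} (hU : IsOpen U) {f : ℂ → ℂ}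
    (hf : DifferentiableOn ℂ f U) {r : ℝ} (hr : 0 < r) (hs : sphere (0 : ℂ) r ⊆ U) :
    (∮ z in C((0 : ℂ), r), deriv f z) = 0 := by
  have han : AnalyticOnNhd ℂ f U := hf.analyticOnNhd hU
  have hdc : ContinuousOn (deriv f) U := (han.deriv).continuousOn
  have hmem : ∀ θ : ℝ, circleMap 0 r θ ∈ U := fun θ => hs (circleMap_mem_sphere _ hr.le θ)
  have hder : ∀ θ ∈ Set.uIcc (0 : ℝ) (2 * Real.pi),
      HasDerivAt (fun t => f (circleMap 0 r t))
        (deriv (circleMap 0 r) θ • deriv f (circleMap 0 r θ)) θ := by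
    intro θ _
    have h1 : HasDerivAt f (deriv f (circleMap 0 r θ)) (circleMap 0 r θ) :=
      ((han (circleMap 0 r θ) (hmem θ)).differentiableAt).hasDerivAt
    have h2 := hasDerivAt_circleMap (0 : ℂ) r θ
    have := h1.comp θ h2
    simpa [deriv_circleMap, smul_eq_mul, mul_comm, Function.comp_def] using this
  have hint : IntervalIntegrable
      (fun θ => deriv (circleMap 0 r) θ • deriv f (circleMap 0 r θ)) MeasureTheory.volume
      0 (2 * Real.pi) := by
    apply Continuous.intervalIntegrable
    have hc1 : Continuous fun θ => deriv (circleMap 0 r) θ := by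
      simp only [deriv_circleMap]; exact (continuous_circleMap 0 r).mul continuous_const
    exact hc1.smul ((hdc.comp_continuous (continuous_circleMap 0 r) hmem))
  have := intervalIntegral.integral_eq_sub_of_hasDerivAt hder hint
  rw [circleIntegral, this]
  have : circleMap 0 r (2 * Real.pi) = circleMap 0 r 0 := by
    simpa using (periodic_circleMap 0 r) 0
  simp [this]

/-- Cauchy coefficient formula. -/
lemma coeff_formula {r₀ r : ℝ} (hr : 0 < r) (hrr : r < r₀) {f : ℂ → ℂ}
    (hf : DifferentiableOn ℂ f (ball (0 : ℂ) r₀)) (n : ℕ) :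
    (1 / (n.factorial : ℂ)) * iteratedDeriv n f 0
      = (2 * Real.pi * I : ℂ)⁻¹ * ∮ z in C((0 : ℂ), r), f z / z ^ (n + 1) := by
  lift r to NNReal using hr.le with R hR
  have hsub : closedBall (0 : ℂ) R ⊆ ball (0 : ℂ) r₀ := closedBall_subset_ball hrr
  have h : HasFPowerSeriesOnBall f (cauchyPowerSeries f 0 R) 0 R :=
    (hf.mono hsub).hasFPowerSeriesOnBall (by exact_mod_cast hr)
  have hfs := h.factorial_smul (y := (1 : ℂ)) n
  have hid : iteratedDeriv n f 0 = iteratedFDeriv ℂ n f 0 (fun _ => 1) := by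
    rw [iteratedDeriv_eq_iteratedFDeriv]
  have happ := cauchyPowerSeries_apply f 0 R n 1
  rw [hid, ← hfs, happ]
  have : ((2 * Real.pi * I : ℂ)⁻¹ • ∮ z in C((0:ℂ), (R:ℝ)), (1 / (z - 0)) ^ n • (z - 0)⁻¹ • f z)
      = (2 * Real.pi * I : ℂ)⁻¹ * ∮ z in C((0:ℂ), (R:ℝ)), f z / z ^ (n + 1) := by
    rw [smul_eq_mul]
    congr 1
    apply circleIntegral.integral_congr hr.le
    intro z hz
    have hz0 : z ≠ 0 := ne_of_mem_sphere hz (ne_of_gt hr)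
    simp only [sub_zero, smul_eq_mul, one_div, pow_succ]
    field_simp
    rw [one_div_pow, mul_comm, ← mul_assoc, mul_one_div_cancel (pow_ne_zero n hz0), one_mul]
  rw [this, nsmul_eq_mul, ← mul_assoc, one_div,
    inv_mul_cancel₀ (by exact_mod_cast n.factorial_ne_zero : (n.factorial : ℂ) ≠ 0), one_mul]



lemma circleIntegral_finset_sum {c : ℂ} {R : ℝ} {ι : Type*} (s : Finset ι) (f : ι → ℂ → ℂ)
    (h : ∀ i ∈ s, CircleIntegrable (f i) c R) :
    (∮ z in C(c, R), ∑ i ∈ s, f i z) = ∑ i ∈ s, ∮ z in C(c, R), f i z := by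
  simp only [circleIntegral, Finset.smul_sum]
  rw [intervalIntegral.integral_finset_sum]
  intro i hi
  exact (h i hi).out

lemma geom_id (N : ℕ) {z w fz : ℂ} (hz : z ≠ 0) (hne : z - w ≠ 0) :
    fz / (z - w) - ∑ n ∈ Finset.range N, w ^ n * fz / z ^ (n + 1)
      = (w / z) ^ N * (fz / (z - w)) := by
  induction N with
  | zero => simp
  | succ N ih =>
    rw [Finset.sum_range_succ, ← sub_sub, ih]
    rw [div_pow, div_pow, pow_succ, pow_succ]
    field_simp
    ring

section
variable {r₀ r : ℝ} {φ : ℂ → ℂ} {q : ℝ}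

lemma exists_q (hr : 0 < r) (hφc : ContinuousOn φ (sphere (0 : ℂ) r))
    (hb : ∀ z ∈ sphere (0 : ℂ) r, ‖φ z‖ < r) :
    ∃ q : ℝ, 0 ≤ q ∧ q < 1 ∧ ∀ z ∈ sphere (0 : ℂ) r, ‖φ z‖ ≤ q * r := by
  have hne : (sphere (0 : ℂ) r).Nonempty := ⟨(r : ℂ), by simp [abs_of_pos hr, hr.le]⟩
  obtain ⟨z₀, hz₀, hmax⟩ := (isCompact_sphere (0 : ℂ) r).exists_isMaxOn hne
    (hφc.norm)
  refine ⟨‖φ z₀‖ / r, by positivity, ?_, ?_⟩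
  · rw [div_lt_one hr]; exact hb z₀ hz₀
  · intro z hz
    rw [div_mul_cancel₀ _ hr.ne']
    exact hmax hz

lemma term_pointwise_bound (hr : 0 < r)
    (hq : ∀ z ∈ sphere (0 : ℂ) r, ‖φ z‖ ≤ q * r) (hq0 : 0 ≤ q)
    {f : ℂ → ℂ} {C : ℝ} (hC : ∀ z ∈ sphere (0 : ℂ) r, ‖f z‖ ≤ C) (n : ℕ) :
    ∀ z ∈ sphere (0 : ℂ) r, ‖φ z ^ n * f z / z ^ (n + 1)‖ ≤ C * q ^ n / r := by
  intro z hz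
  have hC0 : 0 ≤ C := le_trans (norm_nonneg _) (hC z hz)
  have hzr : ‖z‖ = r := mem_sphere_zero_iff_norm.mp hz
  rw [norm_div, norm_mul, norm_pow, norm_pow, hzr]
  have h1 : ‖φ z‖ ^ n * ‖f z‖ ≤ (q * r) ^ n * C :=
    mul_le_mul (pow_le_pow_left₀ (norm_nonneg _) (hq z hz) n) (hC z hz)
      (norm_nonneg _) (by positivity)
  have h2 : ((q * r) ^ n * C) / r ^ (n + 1) = C * q ^ n / r := by
    rw [mul_pow, pow_succ]
    field_simp
  calc ‖φ z‖ ^ n * ‖f z‖ / r ^ (n + 1) ≤ ((q * r) ^ n * C) / r ^ (n + 1) := by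
        apply div_le_div_of_nonneg_right h1 (by positivity) |>.trans_eq rfl
    _ = C * q ^ n / r := h2

lemma integral_term_bound (hr : 0 < r)
    (hq : ∀ z ∈ sphere (0 : ℂ) r, ‖φ z‖ ≤ q * r) (hq0 : 0 ≤ q)
    {f : ℂ → ℂ} {C : ℝ} (hC : ∀ z ∈ sphere (0 : ℂ) r, ‖f z‖ ≤ C) (n : ℕ) :
    ‖∮ z in C((0 : ℂ), r), φ z ^ n * f z / z ^ (n + 1)‖
      ≤ 2 * Real.pi * C * q ^ n := by
  have hC0 : 0 ≤ C := le_trans (norm_nonneg _) (hC (r : ℂ) (by simp [abs_of_pos hr]))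
  calc ‖∮ z in C((0 : ℂ), r), φ z ^ n * f z / z ^ (n + 1)‖
      ≤ 2 * Real.pi * r * (C * q ^ n / r) :=
        circleIntegral.norm_integral_le_of_norm_le_const hr.le
          (term_pointwise_bound hr hq hq0 hC n)
    _ = 2 * Real.pi * C * q ^ n := by field_simp

lemma integral_sum_tendsto (hr : 0 < r) (hrr : r < r₀)
    (hφ : DifferentiableOn ℂ φ (ball (0 : ℂ) r₀))
    (hq : ∀ z ∈ sphere (0 : ℂ) r, ‖φ z‖ ≤ q * r) (hq0 : 0 ≤ q) (hq1 : q < 1)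
    {f : ℂ → ℂ} (hf : ContinuousOn f (sphere (0 : ℂ) r)) :
    Filter.Tendsto
      (fun N => ∑ n ∈ Finset.range N, ∮ z in C((0 : ℂ), r), φ z ^ n * f z / z ^ (n + 1))
      atTop (𝓝 (∮ z in C((0 : ℂ), r), f z / (z - φ z))) := by
  have hsub : sphere (0 : ℂ) r ⊆ ball (0 : ℂ) r₀ := fun z hz => by
    rw [mem_ball, dist_zero_right]
    rw [mem_sphere_zero_iff_norm] at hz
    rw [hz]; exact hrr
  have hφc : ContinuousOn φ (sphere (0 : ℂ) r) := (hφ.continuousOn).mono hsub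
  have hz0 : ∀ z ∈ sphere (0 : ℂ) r, z ≠ 0 := fun z hz => ne_of_mem_sphere hz hr.ne'
  have hzn : ∀ z ∈ sphere (0 : ℂ) r, ‖z‖ = r := fun z hz => mem_sphere_zero_iff_norm.mp hz
  have hlow : ∀ z ∈ sphere (0 : ℂ) r, r * (1 - q) ≤ ‖z - φ z‖ := by
    intro z hz
    have h1 : ‖z‖ - ‖φ z‖ ≤ ‖z - φ z‖ := norm_sub_norm_le _ _
    have := hq z hz
    rw [hzn z hz] at h1
    nlinarith
  have hq1' : 0 < r * (1 - q) := by nlinarith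
  have hzφ : ∀ z ∈ sphere (0 : ℂ) r, z - φ z ≠ 0 := by
    intro z hz h0
    have := hlow z hz
    rw [h0, norm_zero] at this
    nlinarith
  obtain ⟨C, hC⟩ := (isCompact_sphere (0 : ℂ) r).exists_bound_of_continuousOn hf
  have hC0 : 0 ≤ C := le_trans (norm_nonneg _) (hC (r : ℂ) (by simp [abs_of_pos hr]))
  have hgc : ∀ n : ℕ, ContinuousOn (fun z => φ z ^ n * f z / z ^ (n + 1)) (sphere (0 : ℂ) r) :=
    fun n => ((hφc.pow n).mul hf).div (continuousOn_id.pow (n + 1))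
      (fun z hz => pow_ne_zero _ (hz0 z hz))
  have hgint : ∀ n : ℕ, CircleIntegrable (fun z => φ z ^ n * f z / z ^ (n + 1)) 0 r :=
    fun n => (hgc n).circleIntegrable hr.le
  have hTc : ContinuousOn (fun z => f z / (z - φ z)) (sphere (0 : ℂ) r) :=
    hf.div (continuousOn_id.sub hφc) hzφ
  have hTint : CircleIntegrable (fun z => f z / (z - φ z)) 0 r := hTc.circleIntegrable hr.le
  rw [tendsto_iff_norm_sub_tendsto_zero]
  have key : ∀ N : ℕ,
      ‖(∑ n ∈ Finset.range N, ∮ z in C((0 : ℂ), r), φ z ^ n * f z / z ^ (n + 1)) -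
        ∮ z in C((0 : ℂ), r), f z / (z - φ z)‖
      ≤ 2 * Real.pi * (C / (1 - q)) * q ^ N := by
    intro N
    have hsum : (∑ n ∈ Finset.range N, ∮ z in C((0 : ℂ), r), φ z ^ n * f z / z ^ (n + 1))
        = ∮ z in C((0 : ℂ), r), ∑ n ∈ Finset.range N, φ z ^ n * f z / z ^ (n + 1) :=
      (circleIntegral_finset_sum _ _ (fun n _ => hgint n)).symm
    have hsumint : CircleIntegrable
        (fun z => ∑ n ∈ Finset.range N, φ z ^ n * f z / z ^ (n + 1)) 0 r := by
      apply ContinuousOn.circleIntegrable hr.le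
      exact continuousOn_finset_sum _ (fun n _ => hgc n)
    have hdiff : (∮ z in C((0 : ℂ), r), f z / (z - φ z)) -
        (∮ z in C((0 : ℂ), r), ∑ n ∈ Finset.range N, φ z ^ n * f z / z ^ (n + 1))
        = ∮ z in C((0 : ℂ), r), (φ z / z) ^ N * (f z / (z - φ z)) := by
      rw [← circleIntegral.integral_sub hTint hsumint]
      apply circleIntegral.integral_congr hr.le
      intro z hz
      exact geom_id N (hz0 z hz) (hzφ z hz)
    rw [norm_sub_rev, hsum, hdiff]
    have hb : ∀ z ∈ sphere (0 : ℂ) r, ‖(φ z / z) ^ N * (f z / (z - φ z))‖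
        ≤ q ^ N * (C / (r * (1 - q))) := by
      intro z hz
      rw [norm_mul, norm_pow, norm_div, norm_div, hzn z hz]
      have h1 : ‖φ z‖ / r ≤ q := by
        rw [div_le_iff₀ hr]; exact hq z hz
      have h2 : ‖f z‖ / ‖z - φ z‖ ≤ C / (r * (1 - q)) := by
        apply div_le_div₀ (by exact hC0) (hC z hz) hq1' (hlow z hz)
      exact mul_le_mul (pow_le_pow_left₀ (by positivity) h1 N) h2 (by positivity)
        (by positivity)
    calc ‖∮ z in C((0 : ℂ), r), (φ z / z) ^ N * (f z / (z - φ z))‖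
        ≤ 2 * Real.pi * r * (q ^ N * (C / (r * (1 - q)))) :=
          circleIntegral.norm_integral_le_of_norm_le_const hr.le hb
      _ = 2 * Real.pi * (C / (1 - q)) * q ^ N := by
          have h1q : (1 : ℝ) - q ≠ 0 := by nlinarith
          have hrne : r ≠ 0 := hr.ne'
          field_simp
  have hlim : Filter.Tendsto (fun N : ℕ => 2 * Real.pi * (C / (1 - q)) * q ^ N)
      atTop (𝓝 0) := by
    rw [show (0 : ℝ) = 2 * Real.pi * (C / (1 - q)) * 0 by ring]
    exact (tendsto_pow_atTop_nhds_zero_of_lt_one hq0 hq1).const_mul _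
  exact squeeze_zero (fun N => norm_nonneg _) key hlim

end



section
variable {r₀ r : ℝ} {φ : ℂ → ℂ}

lemma phi_deriv_integral (hr : 0 < r) (hrr : r < r₀)
    (hφ : DifferentiableOn ℂ φ (ball (0 : ℂ) r₀)) (n : ℕ) :
    (∮ z in C((0 : ℂ), r), φ z ^ n * deriv φ z / z ^ (n + 1))
      = ∮ z in C((0 : ℂ), r), φ z ^ (n + 1) / z ^ (n + 2) := by
  have hsub : sphere (0 : ℂ) r ⊆ ball (0 : ℂ) r₀ := fun z hz => by
    rw [mem_ball, dist_zero_right, mem_sphere_zero_iff_norm.mp hz]; exact hrr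
  have hz0 : ∀ z ∈ sphere (0 : ℂ) r, z ≠ 0 := fun z hz => ne_of_mem_sphere hz hr.ne'
  set U : Set ℂ := ball (0 : ℂ) r₀ \ {0} with hUdef
  have hU : IsOpen U := isOpen_ball.sdiff isClosed_singleton
  have hsU : sphere (0 : ℂ) r ⊆ U := fun z hz => ⟨hsub hz, hz0 z hz⟩
  have han : AnalyticOnNhd ℂ φ (ball (0 : ℂ) r₀) := hφ.analyticOnNhd isOpen_ball
  have hφc' : ContinuousOn (deriv φ) (ball (0 : ℂ) r₀) := han.deriv.continuousOn
  set m : ℤ := -(n + 1 : ℕ) with hm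
  set u : ℂ → ℂ := fun z => φ z ^ (n + 1) * z ^ m with hu
  have hudiff : DifferentiableOn ℂ u U := by
    apply DifferentiableOn.mul
    · exact (hφ.mono (Set.diff_subset)).pow _
    · intro z hz
      exact (differentiableAt_zpow.mpr (Or.inl hz.2)).differentiableWithinAt
  have h0 : (∮ z in C((0 : ℂ), r), deriv u z) = 0 :=
    circleIntegral_deriv_eq_zero hU hudiff hr hsU
  have hEq : Set.EqOn (deriv u)
      (fun z => ((n : ℂ) + 1) *
        (φ z ^ n * deriv φ z / z ^ (n + 1) - φ z ^ (n + 1) / z ^ (n + 2)))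
      (sphere (0 : ℂ) r) := by
    intro z hz
    have hz0' : z ≠ 0 := hz0 z hz
    have hφz : HasDerivAt φ (deriv φ z) z :=
      ((han z (hsub hz)).differentiableAt).hasDerivAt
    have h1 : HasDerivAt (fun w => φ w ^ (n + 1))
        (((n : ℂ) + 1) * φ z ^ n * deriv φ z) z := by
      have := hφz.fun_pow (n + 1)
      simpa [Nat.cast_add] using this
    have h2 : HasDerivAt (fun w : ℂ => w ^ m) ((m : ℂ) * z ^ (m - 1)) z :=
      hasDerivAt_zpow m z (Or.inl hz0')
    have hprod := h1.mul h2
    have hderiv : deriv u z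
        = ((n : ℂ) + 1) * φ z ^ n * deriv φ z * z ^ m
          + φ z ^ (n + 1) * ((m : ℂ) * z ^ (m - 1)) := hprod.deriv
    rw [hderiv]
    have e1 : (z : ℂ) ^ m = (z ^ (n + 1))⁻¹ := by
      rw [hm, zpow_neg, zpow_natCast]
    have e2 : (z : ℂ) ^ (m - 1) = (z ^ (n + 2))⁻¹ := by
      rw [show m - 1 = -(n + 2 : ℕ) by rw [hm]; push_cast; ring, zpow_neg, zpow_natCast]
    have e3 : ((m : ℤ) : ℂ) = -((n : ℂ) + 1) := by rw [hm]; push_cast; ring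
    rw [e1, e2, e3]
    field_simp
    ring
  rw [circleIntegral.integral_congr hr.le hEq] at h0
  have hφcs : ContinuousOn φ (sphere (0 : ℂ) r) := hφ.continuousOn.mono hsub
  have hdcs : ContinuousOn (deriv φ) (sphere (0 : ℂ) r) := hφc'.mono hsub
  have hA : CircleIntegrable (fun z => φ z ^ n * deriv φ z / z ^ (n + 1)) 0 r := by
    apply ContinuousOn.circleIntegrable hr.le
    exact ((hφcs.pow n).mul hdcs).div (continuousOn_id.pow (n + 1))
      (fun z hz => pow_ne_zero _ (hz0 z hz))
  have hB : CircleIntegrable (fun z => φ z ^ (n + 1) / z ^ (n + 2)) 0 r := by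
    apply ContinuousOn.circleIntegrable hr.le
    exact (hφcs.pow (n + 1)).div (continuousOn_id.pow (n + 2))
      (fun z hz => pow_ne_zero _ (hz0 z hz))
  have hsmul : (∮ z in C((0 : ℂ), r), ((n : ℂ) + 1) *
        (φ z ^ n * deriv φ z / z ^ (n + 1) - φ z ^ (n + 1) / z ^ (n + 2)))
      = ((n : ℂ) + 1) * ∮ z in C((0 : ℂ), r),
        (φ z ^ n * deriv φ z / z ^ (n + 1) - φ z ^ (n + 1) / z ^ (n + 2)) := by
    simpa [smul_eq_mul] using circleIntegral.integral_smul ((n : ℂ) + 1)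
      (fun z => (φ z ^ n * deriv φ z / z ^ (n + 1) - φ z ^ (n + 1) / z ^ (n + 2))) 0 r
  rw [hsmul, circleIntegral.integral_sub hA hB, mul_eq_zero] at h0
  rcases h0 with h0 | h0
  · exact absurd h0 (Nat.cast_add_one_ne_zero n)
  · exact sub_eq_zero.mp h0

end

section
variable {r₀ r : ℝ} {φ : ℂ → ℂ} {q : ℝ}


lemma winding_one (hr : 0 < r) (hrr : r < r₀)
    (hφ : DifferentiableOn ℂ φ (ball (0 : ℂ) r₀))
    (hq : ∀ z ∈ sphere (0 : ℂ) r, ‖φ z‖ ≤ q * r) (hq0 : 0 ≤ q) (hq1 : q < 1) :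
    (∮ z in C((0 : ℂ), r), (1 - deriv φ z) / (z - φ z)) = 2 * Real.pi * I := by
  have hsub : sphere (0 : ℂ) r ⊆ ball (0 : ℂ) r₀ := fun z hz => by
    rw [mem_ball, dist_zero_right, mem_sphere_zero_iff_norm.mp hz]; exact hrr
  have hz0 : ∀ z ∈ sphere (0 : ℂ) r, z ≠ 0 := fun z hz => ne_of_mem_sphere hz hr.ne'
  have han : AnalyticOnNhd ℂ φ (ball (0 : ℂ) r₀) := hφ.analyticOnNhd isOpen_ball
  have hφcs : ContinuousOn φ (sphere (0 : ℂ) r) := hφ.continuousOn.mono hsub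
  have hdcs : ContinuousOn (deriv φ) (sphere (0 : ℂ) r) := han.deriv.continuousOn.mono hsub
  have hfc : ContinuousOn (fun z => 1 - deriv φ z) (sphere (0 : ℂ) r) :=
    continuousOn_const.sub hdcs
  set J : ℕ → ℂ := fun n => ∮ z in C((0 : ℂ), r), φ z ^ n / z ^ (n + 1) with hJ
  -- term splitting
  have hterm : ∀ n : ℕ,
      (∮ z in C((0 : ℂ), r), φ z ^ n * (1 - deriv φ z) / z ^ (n + 1)) = J n - J (n + 1) := by
    intro n
    have hsplit : (∮ z in C((0 : ℂ), r), φ z ^ n * (1 - deriv φ z) / z ^ (n + 1))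
        = ∮ z in C((0 : ℂ), r),
            (φ z ^ n / z ^ (n + 1) - φ z ^ n * deriv φ z / z ^ (n + 1)) := by
      apply circleIntegral.integral_congr hr.le
      intro z hz
      have := hz0 z hz
      field_simp
    have hI1 : CircleIntegrable (fun z => φ z ^ n / z ^ (n + 1)) 0 r :=
      ContinuousOn.circleIntegrable hr.le ((hφcs.pow n).div (continuousOn_id.pow (n + 1))
        (fun z hz => pow_ne_zero _ (hz0 z hz)))
    have hI2 : CircleIntegrable (fun z => φ z ^ n * deriv φ z / z ^ (n + 1)) 0 r :=
      ContinuousOn.circleIntegrable hr.le (((hφcs.pow n).mul hdcs).div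
        (continuousOn_id.pow (n + 1)) (fun z hz => pow_ne_zero _ (hz0 z hz)))
    rw [hsplit, circleIntegral.integral_sub hI1 hI2, phi_deriv_integral hr hrr hφ n]
  -- partial sums telescope
  have htel : ∀ N : ℕ,
      (∑ n ∈ Finset.range N, ∮ z in C((0 : ℂ), r), φ z ^ n * (1 - deriv φ z) / z ^ (n + 1))
        = J 0 - J N := by
    intro N
    rw [Finset.sum_congr rfl (fun n _ => hterm n)]
    exact Finset.sum_range_sub' J N
  -- J N → 0
  have hJbound : ∀ n : ℕ, ‖J n‖ ≤ 2 * Real.pi * 1 * q ^ n := by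
    intro n
    have := integral_term_bound (φ := φ) hr hq hq0
      (f := fun _ => (1 : ℂ)) (C := 1) (fun z _ => by simp) n
    simpa [mul_one] using this
  have hJlim : Filter.Tendsto J atTop (𝓝 0) := by
    rw [show (0 : ℂ) = 0 by rfl]
    have h2 : Filter.Tendsto (fun n : ℕ => 2 * Real.pi * 1 * q ^ n) atTop (𝓝 0) := by
      rw [show (0 : ℝ) = 2 * Real.pi * 1 * 0 by ring]
      exact (tendsto_pow_atTop_nhds_zero_of_lt_one hq0 hq1).const_mul _
    exact squeeze_zero_norm hJbound h2
  -- partial sums tend to J 0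
  have hlim1 : Filter.Tendsto
      (fun N => ∑ n ∈ Finset.range N,
        ∮ z in C((0 : ℂ), r), φ z ^ n * (1 - deriv φ z) / z ^ (n + 1))
      atTop (𝓝 (J 0)) := by
    simp only [htel]
    simpa using Filter.Tendsto.const_sub (J 0) hJlim
  have hlim2 := integral_sum_tendsto hr hrr hφ hq hq0 hq1 hfc
  have hJ0 : J 0 = 2 * Real.pi * I := by
    have : J 0 = ∮ z in C((0 : ℂ), r), (z - 0)⁻¹ := by
      apply circleIntegral.integral_congr hr.le
      intro z hz
      simp [pow_one]
    rw [this, circleIntegral.integral_sub_inv_of_mem_ball (by simpa using hr)]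
  rw [← hJ0]
  exact tendsto_nhds_unique hlim2 hlim1

end


open Classical in
noncomputable def aord (g : ℂ → ℂ) (z : ℂ) : ℕ :=
  if h : AnalyticAt ℂ g z then (analyticOrderAt g z).toNat else 0

lemma aord_eq {g : ℂ → ℂ} {z : ℂ} (h : AnalyticAt ℂ g z) : aord g z = (analyticOrderAt g z).toNat := by
  unfold aord
  rw [dif_pos h]

lemma order_eq_zero_of_ne {g : ℂ → ℂ} {z : ℂ} (h : AnalyticAt ℂ g z) (hz : g z ≠ 0) :
    analyticOrderAt g z = (0 : ℕ) := by
  rw [h.analyticOrderAt_eq_natCast (n := 0)]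
  exact ⟨g, h, hz, by simp⟩

lemma aord_of_ne {g : ℂ → ℂ} {z : ℂ} (hz : g z ≠ 0) : aord g z = 0 := by
  unfold aord
  split_ifs with h
  · rw [order_eq_zero_of_ne h hz]; rfl
  · rfl

lemma order_ne_zero_of_eq {g : ℂ → ℂ} {z : ℂ} (h : AnalyticAt ℂ g z) (hz : g z = 0) :
    analyticOrderAt g z ≠ (0 : ℕ) := by
  intro h0
  rw [h.analyticOrderAt_eq_natCast (n := 0)] at h0
  obtain ⟨G, hGan, hGne, hev⟩ := h0
  simp only [pow_zero, one_smul] at hev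
  exact hGne (hev.self_of_nhds ▸ hz)

/-- order of dslope at the splitting point. -/
lemma order_dslope_at {g : ℂ → ℂ} {w : ℂ} (hgan : AnalyticAt ℂ g w)
    (h1an : AnalyticAt ℂ (dslope g w) w) (hw0 : g w = 0) {k : ℕ}
    (hk : analyticOrderAt g w = ((k + 1 : ℕ) : ℕ∞)) : analyticOrderAt (dslope g w) w = (k : ℕ∞) := by
  obtain ⟨G, hGan, hGne, hfac⟩ := (hgan.analyticOrderAt_eq_natCast (n := k + 1)).mp hk
  have hval : dslope g w w = (w - w) ^ k * G w := by
    rw [dslope_same]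
    have hderiv : deriv g w = deriv (fun z => (z - w) ^ (k + 1) * G z) w :=
      Filter.EventuallyEq.deriv_eq (by
        filter_upwards [hfac] with z hz
        simpa [smul_eq_mul] using hz)
    rw [hderiv]
    have h1 : HasDerivAt (fun z : ℂ => (z - w) ^ (k + 1))
        (((k : ℂ) + 1) * (w - w) ^ k * 1) w := by
      have := ((hasDerivAt_id w).sub_const w).fun_pow (k + 1)
      simpa [Nat.cast_add] using this
    have h2 : HasDerivAt G (deriv G w) w := hGan.differentiableAt.hasDerivAt
    have := (h1.fun_mul h2).deriv
    rw [this]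
    cases k <;> simp
  have hev : ∀ᶠ z in 𝓝 w, dslope g w z = (z - w) ^ k * G z := by
    filter_upwards [hfac] with z hz
    by_cases hzw : z = w
    · subst hzw; exact hval
    · rw [dslope_of_ne g hzw, slope_def_field, hw0, sub_zero, hz]
      have : z - w ≠ 0 := sub_ne_zero.mpr hzw
      field_simp [smul_eq_mul]
      ring
  rw [h1an.analyticOrderAt_eq_natCast (n := k)]
  exact ⟨G, hGan, hGne, by simpa [smul_eq_mul] using hev⟩

/-- order of dslope away from the splitting point. -/
lemma order_dslope_away {g : ℂ → ℂ} {w v : ℂ} (hvw : v ≠ w)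
    (hgan : AnalyticAt ℂ g v) (h1an : AnalyticAt ℂ (dslope g w) v) (hw0 : g w = 0) :
    analyticOrderAt (dslope g w) v = analyticOrderAt g v := by
  have hne : ∀ᶠ z in 𝓝 v, z ≠ w := eventually_ne_nhds hvw
  have hds : ∀ᶠ z in 𝓝 v, dslope g w z = g z / (z - w) := by
    filter_upwards [hne] with z hz
    rw [dslope_of_ne g hz, slope_def_field, hw0, sub_zero]
  rcases eq_or_ne (analyticOrderAt g v) ⊤ with htop | hfin
  · rw [htop, analyticOrderAt_eq_top]
    rw [analyticOrderAt_eq_top] at htop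
    filter_upwards [hds, htop] with z h1 h2
    rw [h1, h2, zero_div]
  · obtain ⟨m, hm⟩ := WithTop.ne_top_iff_exists.mp hfin
    have hm' : analyticOrderAt g v = (m : ℕ∞) := by exact_mod_cast hm.symm
    obtain ⟨G, hGan, hGne, hfac⟩ := (hgan.analyticOrderAt_eq_natCast (n := m)).mp hm'
    rw [hm']
    rw [h1an.analyticOrderAt_eq_natCast (n := m)]
    refine ⟨fun z => G z / (z - w), ?_, ?_, ?_⟩
    · exact hGan.div ((analyticAt_id.sub analyticAt_const)) (sub_ne_zero.mpr hvw)
    · exact div_ne_zero hGne (sub_ne_zero.mpr hvw)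
    · filter_upwards [hds, hfac] with z h1 h2
      rw [h1, h2]
      simp [smul_eq_mul, mul_div_assoc]

section
variable {r₀ r : ℝ}

lemma not_locally_zero (hr : 0 < r) (hrr : r < r₀) {g : ℂ → ℂ}
    (hg : DifferentiableOn ℂ g (ball (0 : ℂ) r₀))
    (hsp : ∀ z ∈ sphere (0 : ℂ) r, g z ≠ 0) {w : ℂ} (hw : w ∈ ball (0 : ℂ) r₀) :
    ¬ (∃ᶠ z in 𝓝[≠] w, g z = 0) := by
  intro hfreq
  have han : AnalyticOnNhd ℂ g (ball (0 : ℂ) r₀) := hg.analyticOnNhd isOpen_ball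
  have := han.eqOn_zero_of_preconnected_of_frequently_eq_zero
    (convex_ball (0 : ℂ) r₀).isPreconnected hw hfreq
  have hrs : (r : ℂ) ∈ sphere (0 : ℂ) r := by simp [abs_of_pos hr]
  have hrb : (r : ℂ) ∈ ball (0 : ℂ) r₀ := by
    simp only [mem_ball, dist_zero_right, Complex.norm_real, Real.norm_eq_abs, abs_of_pos hr]
    exact hrr
  exact hsp _ hrs (this hrb)

lemma zeros_finite (hr : 0 < r) (hrr : r < r₀) {g : ℂ → ℂ}
    (hg : DifferentiableOn ℂ g (ball (0 : ℂ) r₀))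
    (hsp : ∀ z ∈ sphere (0 : ℂ) r, g z ≠ 0) :
    Set.Finite {z : ℂ | z ∈ closedBall (0 : ℂ) r ∧ g z = 0} := by
  by_contra hinf
  have hinf' : Set.Infinite {z : ℂ | z ∈ closedBall (0 : ℂ) r ∧ g z = 0} := hinf
  obtain ⟨x, hxK, hacc⟩ := hinf'.exists_accPt_of_subset_isCompact
    (isCompact_closedBall (0 : ℂ) r) (fun z hz => hz.1)
  have hxb : x ∈ ball (0 : ℂ) r₀ := by
    rw [mem_ball, dist_zero_right]
    exact lt_of_le_of_lt (mem_closedBall_zero_iff.mp hxK) hrr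
  have hfreq : ∃ᶠ z in 𝓝[≠] x, g z = 0 := by
    rw [accPt_iff_frequently] at hacc
    rw [frequently_nhdsWithin_iff]
    exact hacc.mono (fun z hz => ⟨hz.2.2, hz.1⟩)
  exact not_locally_zero hr hrr hg hsp hxb hfreq

lemma order_succ (hr : 0 < r) (hrr : r < r₀) {g : ℂ → ℂ}
    (hg : DifferentiableOn ℂ g (ball (0 : ℂ) r₀))
    (hsp : ∀ z ∈ sphere (0 : ℂ) r, g z ≠ 0) {w : ℂ} (hw : w ∈ ball (0 : ℂ) r₀)
    (hw0 : g w = 0) (han : AnalyticAt ℂ g w) :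
    ∃ k : ℕ, analyticOrderAt g w = ((k + 1 : ℕ) : ℕ∞) := by
  have hne : analyticOrderAt g w ≠ ⊤ := by
    intro htop
    rw [analyticOrderAt_eq_top] at htop
    apply not_locally_zero hr hrr hg hsp hw
    exact (htop.filter_mono nhdsWithin_le_nhds).frequently
  obtain ⟨m, hm⟩ := WithTop.ne_top_iff_exists.mp hne
  have hm' : analyticOrderAt g w = (m : ℕ∞) := by exact_mod_cast hm.symm
  have hm0 : m ≠ 0 := by
    intro h0
    subst h0
    exact order_ne_zero_of_eq han hw0 (by exact_mod_cast hm')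
  obtain ⟨k, rfl⟩ := Nat.exists_eq_succ_of_ne_zero hm0
  exact ⟨k, hm'⟩

end

lemma circleIntegral_add {f g : ℂ → ℂ} {c : ℂ} {R : ℝ} (hf : CircleIntegrable f c R)
    (hg : CircleIntegrable g c R) :
    (∮ z in C(c, R), (f z + g z)) = (∮ z in C(c, R), f z) + ∮ z in C(c, R), g z := by
  simp only [circleIntegral, smul_add]
  exact intervalIntegral.integral_add hf.out hg.out

section
variable {r₀ r : ℝ}

lemma argument_principle (hr : 0 < r) (hrr : r < r₀) :
    ∀ n : ℕ, ∀ g : ℂ → ℂ, DifferentiableOn ℂ g (ball (0 : ℂ) r₀) →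
      (∀ z ∈ sphere (0 : ℂ) r, g z ≠ 0) →
      ∀ Z : Finset ℂ, ((↑Z : Set ℂ) = {z : ℂ | z ∈ closedBall (0 : ℂ) r ∧ g z = 0}) →
      (∑ z ∈ Z, aord g z) = n →
      (∮ z in C((0 : ℂ), r), deriv g z / g z) = 2 * Real.pi * I * n := by
  intro n
  induction n using Nat.strong_induction_on with
  | _ n IH =>
  intro g hg hsp Z hZ hsum
  have hcb : closedBall (0 : ℂ) r ⊆ ball (0 : ℂ) r₀ := closedBall_subset_ball hrr
  have hspb : sphere (0 : ℂ) r ⊆ ball (0 : ℂ) r₀ := fun z hz => by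
    rw [mem_ball, dist_zero_right, mem_sphere_zero_iff_norm.mp hz]; exact hrr
  have han : AnalyticOnNhd ℂ g (ball (0 : ℂ) r₀) := hg.analyticOnNhd isOpen_ball
  rcases Finset.eq_empty_or_nonempty Z with hZe | ⟨w, hwZ⟩
  · -- no zeros
    have hn0 : n = 0 := by rw [hZe] at hsum; simpa using hsum.symm
    subst hn0
    have gnz : ∀ z ∈ closedBall (0 : ℂ) r, g z ≠ 0 := by
      intro z hz h0
      have hmem : z ∈ (↑Z : Set ℂ) := by rw [hZ]; exact ⟨hz, h0⟩
      rw [hZe] at hmem; simpa using hmem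
    have hcont : ContinuousOn (fun z => deriv g z / g z) (closedBall (0 : ℂ) r) :=
      (han.deriv.continuousOn.mono hcb).div ((hg.continuousOn).mono hcb) gnz
    have hdiffat : ∀ z ∈ ball (0 : ℂ) r \ (∅ : Set ℂ),
        DifferentiableAt ℂ (fun z => deriv g z / g z) z := by
      intro z hz
      have hz' : z ∈ ball (0 : ℂ) r₀ := hcb (ball_subset_closedBall hz.1)
      exact ((han.deriv z hz').differentiableAt).div ((han z hz').differentiableAt)
        (gnz z (ball_subset_closedBall hz.1))
    have h := Complex.circleIntegral_eq_zero_of_differentiable_on_off_countable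
      hr.le Set.countable_empty hcont hdiffat
    rw [h]; simp
  · -- there is a zero w
    classical
    have hwZ' : w ∈ (↑Z : Set ℂ) := hwZ
    rw [hZ] at hwZ'
    obtain ⟨hwcb, hw0⟩ := hwZ'
    have hwb : w ∈ ball (0 : ℂ) r := by
      rcases lt_or_eq_of_le (mem_closedBall_zero_iff.mp hwcb) with h | h
      · rwa [mem_ball, dist_zero_right]
      · exact absurd hw0 (hsp w (mem_sphere_zero_iff_norm.mpr h))
    have hwb' : w ∈ ball (0 : ℂ) r₀ := hcb hwcb
    set g1 : ℂ → ℂ := dslope g w with hg1def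
    have hg1 : DifferentiableOn ℂ g1 (ball (0 : ℂ) r₀) :=
      (differentiableOn_dslope (isOpen_ball.mem_nhds hwb')).mpr hg
    have han1 : AnalyticOnNhd ℂ g1 (ball (0 : ℂ) r₀) := hg1.analyticOnNhd isOpen_ball
    have hfact : ∀ z : ℂ, g z = (z - w) * g1 z := by
      intro z
      have h := sub_smul_dslope g w z
      rw [hw0, sub_zero] at h
      rw [← h, smul_eq_mul]
    have hsp1 : ∀ z ∈ sphere (0 : ℂ) r, g1 z ≠ 0 := by
      intro z hz h0
      exact hsp z hz (by rw [hfact z, h0, mul_zero])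
    set Z1 : Finset ℂ := Z.filter (fun z => g1 z = 0) with hZ1def
    have hZ1 : (↑Z1 : Set ℂ) = {z : ℂ | z ∈ closedBall (0 : ℂ) r ∧ g1 z = 0} := by
      ext z
      simp only [hZ1def, Finset.coe_filter, Set.mem_setOf_eq]
      constructor
      · rintro ⟨hz, h0⟩
        have hmem : z ∈ (↑Z : Set ℂ) := hz
        rw [hZ] at hmem
        exact ⟨hmem.1, h0⟩
      · rintro ⟨hz, h0⟩
        refine ⟨?_, h0⟩
        have hmem : z ∈ (↑Z : Set ℂ) := by
          rw [hZ]; exact ⟨hz, by rw [hfact z, h0, mul_zero]⟩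
        exact hmem
    obtain ⟨k, hk⟩ := order_succ hr hrr hg hsp hwb' hw0 (han w hwb')
    have haw : aord g w = k + 1 := by
      rw [aord_eq (han w hwb'), hk]; rfl
    have haw1 : aord g1 w = k := by
      rw [aord_eq (han1 w hwb'), order_dslope_at (han w hwb') (han1 w hwb') hw0 hk]; rfl
    have haway : ∀ z ∈ Z.erase w, aord g1 z = aord g z := by
      intro z hz
      have hzZ := Finset.mem_of_mem_erase hz
      have hzw := Finset.ne_of_mem_erase hz
      have hz' : z ∈ (↑Z : Set ℂ) := hzZ
      rw [hZ] at hz'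
      have hzb : z ∈ ball (0 : ℂ) r₀ := hcb hz'.1
      rw [aord_eq (han z hzb), aord_eq (han1 z hzb),
        order_dslope_away hzw (han z hzb) (han1 z hzb) hw0]
    have h1 : aord g1 w + ∑ z ∈ Z.erase w, aord g1 z = ∑ z ∈ Z, aord g1 z :=
      Finset.add_sum_erase Z _ hwZ
    have h2 : aord g w + ∑ z ∈ Z.erase w, aord g z = ∑ z ∈ Z, aord g z :=
      Finset.add_sum_erase Z _ hwZ
    have h3 : ∑ z ∈ Z.erase w, aord g1 z = ∑ z ∈ Z.erase w, aord g z :=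
      Finset.sum_congr rfl haway
    have hfil : ∑ z ∈ Z1, aord g1 z = ∑ z ∈ Z, aord g1 z := by
      apply Finset.sum_filter_of_ne
      intro z _ hne
      by_contra h0
      exact hne (aord_of_ne h0)
    obtain ⟨m, rfl⟩ : ∃ m, n = m + 1 := ⟨n - 1, by omega⟩
    have hZ1sum : ∑ z ∈ Z1, aord g1 z = m := by omega
    have hint1 := IH m (by omega) g1 hg1 hsp1 Z1 hZ1 hZ1sum
    -- split the integrand on the sphere
    have hEq : Set.EqOn (fun z => deriv g z / g z)
        (fun z => (z - w)⁻¹ + deriv g1 z / g1 z) (sphere (0 : ℂ) r) := by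
      intro z hz
      have hzb : z ∈ ball (0 : ℂ) r₀ := hspb hz
      have hzw : z ≠ w := by
        intro h; rw [h] at hz; exact hsp w hz hw0
      have hzw' : z - w ≠ 0 := sub_ne_zero.mpr hzw
      have hg1z : g1 z ≠ 0 := hsp1 z hz
      have hd1 : HasDerivAt g1 (deriv g1 z) z := ((han1 z hzb).differentiableAt).hasDerivAt
      have hdg : HasDerivAt g (1 * g1 z + (z - w) * deriv g1 z) z := by
        have hprod := (((hasDerivAt_id z).sub_const w).fun_mul hd1)
        have hgfun : g = fun z => (z - w) * g1 z := funext hfact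
        rw [hgfun]
        simpa using hprod
      simp only
      rw [hdg.deriv, hfact z]
      field_simp
    have hintA : CircleIntegrable (fun z => (z - w)⁻¹) 0 r := by
      apply ContinuousOn.circleIntegrable hr.le
      apply ContinuousOn.inv₀ (continuousOn_id.sub continuousOn_const)
      intro z hz
      apply sub_ne_zero.mpr
      intro h
      simp only [id_eq] at h
      rw [h] at hz; exact hsp w hz hw0
    have hintB : CircleIntegrable (fun z => deriv g1 z / g1 z) 0 r := by
      apply ContinuousOn.circleIntegrable hr.le
      exact (han1.deriv.continuousOn.mono hspb).div (hg1.continuousOn.mono hspb) hsp1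
    rw [circleIntegral.integral_congr hr.le hEq, circleIntegral_add hintA hintB,
      circleIntegral.integral_sub_inv_of_mem_ball hwb, hint1]
    push_cast
    ring

end

/-- The scalar Lagrange series: absolute convergence and its sum
`F(z*) / (1 - φ'(z*))` at the unique fixed point `z*` of `φ` in the disc. -/
theorem lagrange_series_scalar (r₀ r : ℝ) (hr : 0 < r) (hrr : r < r₀)
    (F φ : ℂ → ℂ)
    (hF : DifferentiableOn ℂ F (Metric.ball (0 : ℂ) r₀))
    (hφ : DifferentiableOn ℂ φ (Metric.ball (0 : ℂ) r₀))
    (hb : ∀ z : ℂ, ‖z‖ = r → ‖φ z‖ < r) :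
    (Summable fun n : ℕ =>
      ‖(1 / (n.factorial : ℂ)) * iteratedDeriv n (fun ε => φ ε ^ n * F ε) 0‖) ∧
    ∃ z : ℂ, ‖z‖ < r ∧ z = φ z ∧
      (∀ w : ℂ, ‖w‖ < r → w = φ w → w = z) ∧
      deriv φ z ≠ 1 ∧
      (∑' n : ℕ, (1 / (n.factorial : ℂ)) * iteratedDeriv n (fun ε => φ ε ^ n * F ε) 0)
        = F z / (1 - deriv φ z) := by
  have hb' : ∀ z ∈ sphere (0 : ℂ) r, ‖φ z‖ < r :=
    fun z hz => hb z (mem_sphere_zero_iff_norm.mp hz)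
  have hspb : sphere (0 : ℂ) r ⊆ ball (0 : ℂ) r₀ := fun z hz => by
    rw [mem_ball, dist_zero_right, mem_sphere_zero_iff_norm.mp hz]; exact hrr
  have hcb : closedBall (0 : ℂ) r ⊆ ball (0 : ℂ) r₀ := closedBall_subset_ball hrr
  have hφc : ContinuousOn φ (sphere (0 : ℂ) r) := hφ.continuousOn.mono hspb
  obtain ⟨q, hq0, hq1, hq⟩ := exists_q hr hφc hb'
  obtain ⟨C, hC⟩ := (isCompact_sphere (0 : ℂ) r).exists_bound_of_continuousOn
    (hF.continuousOn.mono hspb)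
  have hC0 : 0 ≤ C := le_trans (norm_nonneg _) (hC (r : ℂ) (by simp [abs_of_pos hr]))
  set a : ℕ → ℂ :=
    fun n => (1 / (n.factorial : ℂ)) * iteratedDeriv n (fun ε => φ ε ^ n * F ε) 0 with ha
  have hfd : ∀ n : ℕ, DifferentiableOn ℂ (fun ε => φ ε ^ n * F ε) (ball (0 : ℂ) r₀) :=
    fun n => (hφ.pow n).mul hF
  have hcf : ∀ n : ℕ, a n
      = (2 * Real.pi * I : ℂ)⁻¹ * ∮ z in C((0 : ℂ), r), φ z ^ n * F z / z ^ (n + 1) :=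
    fun n => coeff_formula hr hrr (hfd n) n
  have h2π : (2 * Real.pi : ℝ) ≠ 0 := by positivity
  have h2πI : (2 * (Real.pi : ℂ) * I : ℂ) ≠ 0 := by
    simp [Real.pi_ne_zero, I_ne_zero]
  have hnorm2pi : ‖(2 * (Real.pi : ℂ) * I : ℂ)⁻¹‖ = (2 * Real.pi)⁻¹ := by
    simp [Real.pi_pos.le]
  have habound : ∀ n, ‖a n‖ ≤ C * q ^ n := by
    intro n
    rw [hcf n, norm_mul, hnorm2pi]
    calc (2 * Real.pi)⁻¹ * ‖∮ z in C((0 : ℂ), r), φ z ^ n * F z / z ^ (n + 1)‖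
        ≤ (2 * Real.pi)⁻¹ * (2 * Real.pi * C * q ^ n) := by
          gcongr
          exact integral_term_bound hr hq hq0 hC n
      _ = C * q ^ n := by field_simp
  have hsummable : Summable (fun n => ‖a n‖) :=
    Summable.of_nonneg_of_le (fun n => norm_nonneg _) habound
      ((summable_geometric_of_lt_one hq0 hq1).mul_left C)
  refine ⟨hsummable, ?_⟩
  -- the function g
  set g : ℂ → ℂ := fun z => z - φ z with hgdef
  have hgdiff : DifferentiableOn ℂ g (ball (0 : ℂ) r₀) :=
    (differentiable_id.differentiableOn).sub hφ
  have hgsp : ∀ z ∈ sphere (0 : ℂ) r, g z ≠ 0 := by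
    intro z hz h0
    have h1 : z = φ z := sub_eq_zero.mp h0
    have h2 : ‖φ z‖ < r := hb' z hz
    rw [← h1] at h2
    rw [mem_sphere_zero_iff_norm.mp hz] at h2
    exact lt_irrefl r h2
  have hφan : AnalyticOnNhd ℂ φ (ball (0 : ℂ) r₀) := hφ.analyticOnNhd isOpen_ball
  have hgan : AnalyticOnNhd ℂ g (ball (0 : ℂ) r₀) := hgdiff.analyticOnNhd isOpen_ball
  have hderivg : ∀ z ∈ ball (0 : ℂ) r₀, deriv g z = 1 - deriv φ z := by
    intro z hz
    have h1 : HasDerivAt φ (deriv φ z) z := (hφan z hz).differentiableAt.hasDerivAt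
    exact ((hasDerivAt_id z).sub h1).deriv
  have hwind : (∮ z in C((0 : ℂ), r), deriv g z / g z) = 2 * Real.pi * I := by
    rw [← winding_one hr hrr hφ hq hq0 hq1]
    apply circleIntegral.integral_congr hr.le
    intro z hz
    simp only [hgdef]
    rw [hderivg z (hspb hz)]
  -- zero set
  have hfin := zeros_finite hr hrr hgdiff hgsp
  set Z := hfin.toFinset with hZdef
  have hZcoe : (↑Z : Set ℂ) = {z : ℂ | z ∈ closedBall (0 : ℂ) r ∧ g z = 0} :=
    hfin.coe_toFinset
  have hAP := argument_principle hr hrr (∑ z ∈ Z, aord g z) g hgdiff hgsp Z hZcoe rfl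
  have hN1 : (∑ z ∈ Z, aord g z) = 1 := by
    rw [hwind] at hAP
    have h1 : (2 * (Real.pi : ℂ) * I) * 1 = (2 * (Real.pi : ℂ) * I) * (∑ z ∈ Z, aord g z : ℕ) := by
      rw [mul_one]; exact_mod_cast hAP
    have h2 := mul_left_cancel₀ h2πI h1
    exact_mod_cast h2.symm
  have haord_ge : ∀ z ∈ Z, 1 ≤ aord g z := by
    intro z hz
    rw [hfin.mem_toFinset] at hz
    obtain ⟨k, hk⟩ := order_succ hr hrr hgdiff hgsp (hcb hz.1) hz.2 (hgan z (hcb hz.1))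
    rw [aord_eq (hgan z (hcb hz.1)), hk, ENat.toNat_coe]
    omega
  obtain ⟨zs, hzsZ⟩ : Z.Nonempty := by
    by_contra h
    rw [Finset.not_nonempty_iff_eq_empty] at h
    rw [h] at hN1
    simp at hN1
  have hsplit : aord g zs + ∑ z ∈ Z.erase zs, aord g z = ∑ z ∈ Z, aord g z :=
    Finset.add_sum_erase Z (aord g) hzsZ
  have herase0 : ∑ z ∈ Z.erase zs, aord g z = 0 := by
    have := haord_ge zs hzsZ; omega
  have haords : aord g zs = 1 := by
    have := haord_ge zs hzsZ; omega
  have huniq : ∀ z ∈ Z, z = zs := by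
    intro z hz
    by_contra hne
    have hzin : z ∈ Z.erase zs := Finset.mem_erase.mpr ⟨hne, hz⟩
    have h1 := (Finset.sum_eq_zero_iff.mp herase0) z hzin
    have h2 := haord_ge z hz
    omega
  have hzscb := (hfin.mem_toFinset).mp hzsZ
  have hzs0 : g zs = 0 := hzscb.2
  have hzsball : ‖zs‖ < r := by
    rcases lt_or_eq_of_le (mem_closedBall_zero_iff.mp hzscb.1) with h | h
    · exact h
    · exact absurd hzs0 (hgsp zs (mem_sphere_zero_iff_norm.mpr h))
  have hzsfix : zs = φ zs := sub_eq_zero.mp hzs0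
  have hzsb' : zs ∈ ball (0 : ℂ) r₀ := hcb hzscb.1
  -- order 1, derivative nonzero
  have hanz : AnalyticAt ℂ g zs := hgan zs hzsb'
  obtain ⟨k, hk⟩ := order_succ hr hrr hgdiff hgsp hzsb' hzs0 hanz
  have hk0 : k = 0 := by
    have h1 := aord_eq hanz
    rw [hk, ENat.toNat_coe] at h1
    omega
  subst hk0
  set g1 : ℂ → ℂ := dslope g zs with hg1def
  have hg1diff : DifferentiableOn ℂ g1 (ball (0 : ℂ) r₀) :=
    (differentiableOn_dslope (isOpen_ball.mem_nhds hzsb')).mpr hgdiff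
  have han1 : AnalyticOnNhd ℂ g1 (ball (0 : ℂ) r₀) := hg1diff.analyticOnNhd isOpen_ball
  have hord1 : analyticOrderAt g1 zs = ((0 : ℕ) : ℕ∞) :=
    order_dslope_at hanz (han1 zs hzsb') hzs0 hk
  have hg1zs : g1 zs ≠ 0 := by
    obtain ⟨G, hGan, hGne, hev⟩ := ((han1 zs hzsb').analyticOrderAt_eq_natCast (n := 0)).mp hord1
    have h1 := hev.self_of_nhds
    simp only [pow_zero, one_smul] at h1
    rw [h1]; exact hGne
  have hderivgzs : deriv g zs = g1 zs := (dslope_same g zs).symm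
  have hdgne : deriv g zs ≠ 0 := by rw [hderivgzs]; exact hg1zs
  have hdφ : deriv φ zs ≠ 1 := by
    intro h
    apply hdgne
    rw [hderivg zs hzsb', h, sub_self]
  -- factorization
  have hfact : ∀ z : ℂ, g z = (z - zs) * g1 z := by
    intro z
    have h := sub_smul_dslope g zs z
    rw [hzs0, sub_zero] at h
    rw [← h, smul_eq_mul]
  have hg1cb : ∀ z ∈ closedBall (0 : ℂ) r, g1 z ≠ 0 := by
    intro z hz h0
    have hgz : g z = 0 := by rw [hfact z, h0, mul_zero]
    have hzZ : z ∈ Z := (hfin.mem_toFinset).mpr ⟨hz, hgz⟩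
    have hzeq := huniq z hzZ
    rw [hzeq] at h0
    exact hg1zs h0
  -- sum of the series
  have hsummable' : Summable a := hsummable.of_norm
  have hlim1 : Filter.Tendsto (fun N => ∑ n ∈ Finset.range N, a n) atTop (𝓝 (∑' n, a n)) :=
    hsummable'.hasSum.tendsto_sum_nat
  have hFc : ContinuousOn F (sphere (0 : ℂ) r) := hF.continuousOn.mono hspb
  have htends := integral_sum_tendsto hr hrr hφ hq hq0 hq1 hFc
  have hlim2 : Filter.Tendsto (fun N => ∑ n ∈ Finset.range N, a n) atTop
      (𝓝 ((2 * Real.pi * I : ℂ)⁻¹ * ∮ z in C((0 : ℂ), r), F z / (z - φ z))) := by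
    have heq : (fun N => ∑ n ∈ Finset.range N, a n)
        = fun N => (2 * Real.pi * I : ℂ)⁻¹ *
            ∑ n ∈ Finset.range N, ∮ z in C((0 : ℂ), r), φ z ^ n * F z / z ^ (n + 1) := by
      funext N
      rw [Finset.mul_sum]
      exact Finset.sum_congr rfl (fun n _ => hcf n)
    rw [heq]
    exact htends.const_mul _
  have htsum : (∑' n, a n)
      = (2 * Real.pi * I : ℂ)⁻¹ * ∮ z in C((0 : ℂ), r), F z / (z - φ z) :=
    tendsto_nhds_unique hlim1 hlim2
  -- residue evaluation
  set U : Set ℂ := ball (0 : ℂ) r₀ ∩ g1 ⁻¹' {(0 : ℂ)}ᶜ with hU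
  have hUopen : IsOpen U :=
    (hg1diff.continuousOn).isOpen_inter_preimage isOpen_ball isOpen_compl_singleton
  have hcbU : closedBall (0 : ℂ) r ⊆ U := fun z hz => ⟨hcb hz, hg1cb z hz⟩
  have hhdiff : DifferentiableOn ℂ (fun z => F z / g1 z) U :=
    (hF.mono Set.inter_subset_left).div (hg1diff.mono Set.inter_subset_left)
      (fun z hz => hz.2)
  have hdc : DiffContOnCl ℂ (fun z => F z / g1 z) (ball (0 : ℂ) r) := by
    apply DifferentiableOn.diffContOnCl
    rw [closure_ball (0 : ℂ) hr.ne']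
    exact hhdiff.mono hcbU
  have hzsballr : zs ∈ ball (0 : ℂ) r := mem_ball_zero_iff.mpr hzsball
  have hres := hdc.circleIntegral_sub_inv_smul hzsballr
  have hcong : (∮ z in C((0 : ℂ), r), F z / (z - φ z))
      = ∮ z in C((0 : ℂ), r), (z - zs)⁻¹ • (F z / g1 z) := by
    apply circleIntegral.integral_congr hr.le
    intro z hz
    have hzzs : z - zs ≠ 0 := by
      apply sub_ne_zero.mpr
      intro h
      have h1 := mem_sphere_zero_iff_norm.mp hz
      rw [h] at h1
      rw [h1] at hzsball
      exact lt_irrefl r hzsball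
    have hg1z : g1 z ≠ 0 := hg1cb z (sphere_subset_closedBall hz)
    have h1 : z - φ z = (z - zs) * g1 z := hfact z
    simp only
    rw [h1, smul_eq_mul]
    field_simp
  refine ⟨zs, hzsball, hzsfix, ?_, hdφ, ?_⟩
  · intro w hw hwfix
    apply huniq
    rw [hfin.mem_toFinset]
    exact ⟨mem_closedBall_zero_iff.mpr hw.le, sub_eq_zero.mpr hwfix⟩
  · rw [htsum, hcong, hres, smul_eq_mul, ← mul_assoc, inv_mul_cancel₀ h2πI, one_mul]
    congr 1
    rw [← hderivg zs hzsb', hderivgzs]
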